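/- arXiv:1211.0100 — 9 statements merged into one kernel-verified Lean document; each statement's English description precedes it below -/
import Mathlib

section
/- Let c : ℝ → ℝ be continuously differentiable with c(u) ≠ 0 for all u. Let v : ℝ × ℝ → ℝ (a function of the variables (x,u)) be twice continuously differentiable and satisfy, for all (x,u), the PDE c(u)·( v_x²·v_uu − 2·v_x·v_u·v_ux + v_xx·v_u² − c(u)²·v_xx ) − 2·c'(u)·v_x²·v_u = 0. Suppose X : ℝ × ℝ → ℝ (a function of (V,u)) is twice continuously differentiable and satisfies v(X(V,u), u) = V for all (V,u), with ∂X/∂V(V,u) ≠ 0 for all (V,u). Then X satisfies the linear wave equation X_VV(V,u) = ∂/∂u [ c(u)⁻²·X_u(V,u) ] at every point (V,u), where subscripts denote partial derivatives. -/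
noncomputable def pd1 (f : ℝ × ℝ → ℝ) : ℝ × ℝ → ℝ := fun q => deriv (fun y => f (y, q.2)) q.1
noncomputable def pd2 (f : ℝ × ℝ → ℝ) : ℝ × ℝ → ℝ := fun q => deriv (fun s => f (q.1, s)) q.2

lemma hasDerivAt_fst' {f : ℝ × ℝ → ℝ} (hf : Differentiable ℝ f) (q : ℝ × ℝ) :
    HasDerivAt (fun y => f (y, q.2)) (fderiv ℝ f q ((1:ℝ), (0:ℝ))) q.1 := by
  have h : HasDerivAt (fun y : ℝ => (y, q.2)) ((1:ℝ), (0:ℝ)) q.1 :=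
    (hasDerivAt_id q.1).prodMk (hasDerivAt_const q.1 q.2)
  exact (hf (q.1, q.2)).hasFDerivAt.comp_hasDerivAt q.1 h

lemma hasDerivAt_snd' {f : ℝ × ℝ → ℝ} (hf : Differentiable ℝ f) (q : ℝ × ℝ) :
    HasDerivAt (fun s => f (q.1, s)) (fderiv ℝ f q ((0:ℝ), (1:ℝ))) q.2 := by
  have h : HasDerivAt (fun s : ℝ => (q.1, s)) ((0:ℝ), (1:ℝ)) q.2 :=
    (hasDerivAt_const q.2 q.1).prodMk (hasDerivAt_id q.2)
  exact (hf (q.1, q.2)).hasFDerivAt.comp_hasDerivAt q.2 h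

lemma pd1_eq {f : ℝ × ℝ → ℝ} (hf : Differentiable ℝ f) (q : ℝ × ℝ) :
    pd1 f q = fderiv ℝ f q ((1:ℝ), (0:ℝ)) := (hasDerivAt_fst' hf q).deriv

lemma pd2_eq {f : ℝ × ℝ → ℝ} (hf : Differentiable ℝ f) (q : ℝ × ℝ) :
    pd2 f q = fderiv ℝ f q ((0:ℝ), (1:ℝ)) := (hasDerivAt_snd' hf q).deriv

lemma hasDerivAt_pd1 {f : ℝ × ℝ → ℝ} (hf : Differentiable ℝ f) (q : ℝ × ℝ) :
    HasDerivAt (fun y => f (y, q.2)) (pd1 f q) q.1 := by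
  rw [pd1_eq hf]; exact hasDerivAt_fst' hf q

lemma hasDerivAt_pd2 {f : ℝ × ℝ → ℝ} (hf : Differentiable ℝ f) (q : ℝ × ℝ) :
    HasDerivAt (fun s => f (q.1, s)) (pd2 f q) q.2 := by
  rw [pd2_eq hf]; exact hasDerivAt_snd' hf q

lemma chain2 {f : ℝ × ℝ → ℝ} (hf : Differentiable ℝ f) {a b : ℝ → ℝ} {a' b' t : ℝ}
    (ha : HasDerivAt a a' t) (hb : HasDerivAt b b' t) :
    HasDerivAt (fun s => f (a s, b s)) (pd1 f (a t, b t) * a' + pd2 f (a t, b t) * b') t := by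
  have h := (hf (a t, b t)).hasFDerivAt.comp_hasDerivAt t (ha.prodMk hb)
  have e : fderiv ℝ f (a t, b t) (a', b') =
      pd1 f (a t, b t) * a' + pd2 f (a t, b t) * b' := by
    have h2 : (a', b') = a' • ((1:ℝ), (0:ℝ)) + b' • ((0:ℝ), (1:ℝ)) := by
      simp [Prod.ext_iff]
    rw [h2, map_add, map_smul, map_smul, pd1_eq hf, pd2_eq hf, smul_eq_mul, smul_eq_mul]
    ring
  rw [← e]; exact h

lemma contDiff_pd1 {f : ℝ × ℝ → ℝ} (hf : ContDiff ℝ 2 f) : ContDiff ℝ 1 (pd1 f) := by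
  have h : pd1 f = fun q => (fderiv ℝ f q) ((1:ℝ), (0:ℝ)) :=
    funext fun q => pd1_eq (hf.differentiable two_ne_zero) q
  rw [h]
  exact (ContinuousLinearMap.apply ℝ ℝ ((1:ℝ), (0:ℝ))).contDiff.comp
    (hf.fderiv_right (m := 1) (by norm_num))

lemma contDiff_pd2 {f : ℝ × ℝ → ℝ} (hf : ContDiff ℝ 2 f) : ContDiff ℝ 1 (pd2 f) := by
  have h : pd2 f = fun q => (fderiv ℝ f q) ((0:ℝ), (1:ℝ)) :=
    funext fun q => pd2_eq (hf.differentiable two_ne_zero) q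
  rw [h]
  exact (ContinuousLinearMap.apply ℝ ℝ ((0:ℝ), (1:ℝ))).contDiff.comp
    (hf.fderiv_right (m := 1) (by norm_num))

lemma mixed_symm {f : ℝ × ℝ → ℝ} (hf : ContDiff ℝ 2 f) (q : ℝ × ℝ) :
    pd1 (pd2 f) q = pd2 (pd1 f) q := by
  have hfd : Differentiable ℝ f := hf.differentiable two_ne_zero
  have hf1 : ContDiff ℝ 1 (fderiv ℝ f) := hf.fderiv_right (m := 1) (by norm_num)
  have h2 : HasFDerivAt (fderiv ℝ f) (fderiv ℝ (fderiv ℝ f) q) q :=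
    ((hf1.differentiable one_ne_zero) q).hasFDerivAt
  have hp2 : pd2 f = fun p => (fderiv ℝ f p) ((0:ℝ), (1:ℝ)) := funext fun p => pd2_eq hfd p
  have hp1 : pd1 f = fun p => (fderiv ℝ f p) ((1:ℝ), (0:ℝ)) := funext fun p => pd1_eq hfd p
  have hD2 : HasFDerivAt (fun p => (fderiv ℝ f p) ((0:ℝ), (1:ℝ)))
      ((ContinuousLinearMap.apply ℝ ℝ ((0:ℝ),(1:ℝ))).comp (fderiv ℝ (fderiv ℝ f) q)) q :=
    (ContinuousLinearMap.apply ℝ ℝ ((0:ℝ),(1:ℝ))).hasFDerivAt.comp q h2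
  have hD1 : HasFDerivAt (fun p => (fderiv ℝ f p) ((1:ℝ), (0:ℝ)))
      ((ContinuousLinearMap.apply ℝ ℝ ((1:ℝ),(0:ℝ))).comp (fderiv ℝ (fderiv ℝ f) q)) q :=
    (ContinuousLinearMap.apply ℝ ℝ ((1:ℝ),(0:ℝ))).hasFDerivAt.comp q h2
  have e1 : pd1 (pd2 f) q = fderiv ℝ (fderiv ℝ f) q ((1:ℝ),(0:ℝ)) ((0:ℝ),(1:ℝ)) := by
    rw [pd1_eq (by rw [hp2]; exact fun p =>
      ((ContinuousLinearMap.apply ℝ ℝ ((0:ℝ),(1:ℝ))).hasFDerivAt.comp p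
        ((hf1.differentiable one_ne_zero p).hasFDerivAt)).differentiableAt) q]
    conv_lhs => rw [hp2]
    rw [hD2.fderiv]
    simp
  have e2 : pd2 (pd1 f) q = fderiv ℝ (fderiv ℝ f) q ((0:ℝ),(1:ℝ)) ((1:ℝ),(0:ℝ)) := by
    rw [pd2_eq (by rw [hp1]; exact fun p =>
      ((ContinuousLinearMap.apply ℝ ℝ ((1:ℝ),(0:ℝ))).hasFDerivAt.comp p
        ((hf1.differentiable one_ne_zero p).hasFDerivAt)).differentiableAt) q]
    conv_lhs => rw [hp1]
    rw [hD1.fderiv]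
    simp
  rw [e1, e2]
  exact second_derivative_symmetric (fun y => (hfd y).hasFDerivAt) h2 _ _

lemma wave_algebra (C C' a b A B D P Q R T : ℝ) (hC : C ≠ 0)
    (e1 : a * P = 1) (e2 : a * Q + b = 0) (e3 : A * P ^ 2 + a * R = 0)
    (e5 : (A * Q + B) * Q + a * T + (B * Q + D) = 0)
    (pde : C * (a ^ 2 * D - 2 * a * b * B + A * b ^ 2 - C ^ 2 * A) - 2 * C' * a ^ 2 * b = 0) :
    R = -(2 * C ^ 1 * C') / (C ^ 2) ^ 2 * Q + (C ^ 2)⁻¹ * T := by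
  have G : C ^ 4 * R - C ^ 2 * T + 2 * C * C' * Q = 0 := by
    linear_combination (C * P ^ 3) * pde
      + (-(C * P ^ 3) * (C * (-2 * a * B + A * (b - a * Q)) - 2 * C' * a ^ 2)) * e2
      + (-(C ^ 2 * P ^ 3 * a ^ 2)) * e5
      + (C ^ 4 * P) * e3
      + (C * P * a * (1 + a * P) * (C * T - 2 * C' * Q)
          - C * (C ^ 3 * R - C * T + 2 * C' * Q)) * e1
  have G2 : C ^ 3 * R - C * T + 2 * C' * Q = 0 := by
    have h : C * (C ^ 3 * R - C * T + 2 * C' * Q) = 0 := by linear_combination G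
    rcases mul_eq_zero.mp h with h | h
    · exact absurd h hC
    · exact h
  field_simp
  linear_combination G2

/-- Interchanging x and v maps the PDE (4.7), locally related to the inverse
potential system of the potential system of the nonlinear wave equation
u_tt = (c²(u)u_x)_x, invertibly into the linear wave equation
x_vv = (c⁻²(u)x_u)_u (equation (4.8)). -/
theorem stmt_6 (c : ℝ → ℝ) (hc : ContDiff ℝ 1 c) (hc0 : ∀ u : ℝ, c u ≠ 0)
    (v X : ℝ × ℝ → ℝ) (hv : ContDiff ℝ 2 v) (hX : ContDiff ℝ 2 X)
    (hPDE : ∀ x u : ℝ,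
      c u * ((deriv (fun y => v (y, u)) x) ^ 2 * deriv (deriv (fun s => v (x, s))) u
        - 2 * deriv (fun y => v (y, u)) x * deriv (fun s => v (x, s)) u
            * deriv (fun s => deriv (fun y => v (y, s)) x) u
        + deriv (deriv (fun y => v (y, u))) x * (deriv (fun s => v (x, s)) u) ^ 2
        - (c u) ^ 2 * deriv (deriv (fun y => v (y, u))) x)
      - 2 * deriv c u * (deriv (fun y => v (y, u)) x) ^ 2
          * deriv (fun s => v (x, s)) u = 0)
    (hinv : ∀ V u : ℝ, v (X (V, u), u) = V)
    (hXV : ∀ V u : ℝ, deriv (fun a => X (a, u)) V ≠ 0) :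
    ∀ V u : ℝ, deriv (deriv (fun a => X (a, u))) V
      = deriv (fun s => ((c s) ^ 2)⁻¹ * deriv (fun r => X (V, r)) s) u := by
  intro V u
  have hvD : Differentiable ℝ v := hv.differentiable two_ne_zero
  have hXD : Differentiable ℝ X := hX.differentiable two_ne_zero
  have hv1 : Differentiable ℝ (pd1 v) := (contDiff_pd1 hv).differentiable one_ne_zero
  have hv2 : Differentiable ℝ (pd2 v) := (contDiff_pd2 hv).differentiable one_ne_zero
  have hX1 : Differentiable ℝ (pd1 X) := (contDiff_pd1 hX).differentiable one_ne_zero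
  have hX2 : Differentiable ℝ (pd2 X) := (contDiff_pd2 hX).differentiable one_ne_zero
  set x : ℝ := X (V, u) with hx
  have hXa : ∀ a' : ℝ, HasDerivAt (fun s => X (s, u)) (pd1 X (a', u)) a' :=
    fun a' => hasDerivAt_pd1 hXD (a', u)
  have hXb : ∀ s : ℝ, HasDerivAt (fun r => X (V, r)) (pd2 X (V, s)) s :=
    fun s => hasDerivAt_pd2 hXD (V, s)
  -- first-order identities
  have E1 : ∀ a' : ℝ, pd1 v (X (a', u), u) * pd1 X (a', u) = 1 := by
    intro a'
    have h1 : HasDerivAt (fun s => v (X (s, u), u))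
        (pd1 v (X (a', u), u) * pd1 X (a', u) + pd2 v (X (a', u), u) * 0) a' :=
      chain2 hvD (hXa a') (hasDerivAt_const a' u)
    have heq : (fun s => v (X (s, u), u)) = fun s => s := funext fun s => hinv s u
    rw [heq] at h1
    have h2 := h1.unique (hasDerivAt_id a')
    simpa using h2
  have E2 : ∀ s : ℝ, pd1 v (X (V, s), s) * pd2 X (V, s) + pd2 v (X (V, s), s) = 0 := by
    intro s
    have h1 : HasDerivAt (fun r => v (X (V, r), r))
        (pd1 v (X (V, s), s) * pd2 X (V, s) + pd2 v (X (V, s), s) * 1) s :=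
      chain2 hvD (hXb s) (hasDerivAt_id s)
    have heq : (fun r => v (X (V, r), r)) = fun _ => V := funext fun r => hinv V r
    rw [heq] at h1
    have h2 := h1.unique (hasDerivAt_const s V)
    simpa using h2
  -- second-order identity from E1 (differentiate in the first slot)
  have e3 : pd1 (pd1 v) (x, u) * pd1 X (V, u) ^ 2 + pd1 v (x, u) * pd1 (pd1 X) (V, u) = 0 := by
    have h1 : HasDerivAt (fun a' => pd1 v (X (a', u), u))
        (pd1 (pd1 v) (x, u) * pd1 X (V, u) + pd2 (pd1 v) (x, u) * 0) V :=
      chain2 hv1 (hXa V) (hasDerivAt_const V u)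
    have h2 : HasDerivAt (fun a' => pd1 X (a', u)) (pd1 (pd1 X) (V, u)) V :=
      hasDerivAt_pd1 hX1 (V, u)
    have h3 : HasDerivAt (fun a' => pd1 v (X (a', u), u) * pd1 X (a', u)) _ V := h1.mul h2
    have heq : (fun a' => pd1 v (X (a', u), u) * pd1 X (a', u)) = fun _ => (1:ℝ) :=
      funext fun a' => E1 a'
    rw [heq] at h3
    have h4 := h3.unique (hasDerivAt_const V 1)
    linear_combination h4
  -- second-order identity from E2 (differentiate in u)
  have e5raw : (pd1 (pd1 v) (x, u) * pd2 X (V, u) + pd2 (pd1 v) (x, u) * 1) * pd2 X (V, u)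
      + pd1 v (x, u) * pd2 (pd2 X) (V, u)
      + (pd1 (pd2 v) (x, u) * pd2 X (V, u) + pd2 (pd2 v) (x, u) * 1) = 0 := by
    have h1 : HasDerivAt (fun s => pd1 v (X (V, s), s))
        (pd1 (pd1 v) (x, u) * pd2 X (V, u) + pd2 (pd1 v) (x, u) * 1) u :=
      chain2 hv1 (hXb u) (hasDerivAt_id u)
    have h2 : HasDerivAt (fun s => pd2 X (V, s)) (pd2 (pd2 X) (V, u)) u :=
      hasDerivAt_pd2 hX2 (V, u)
    have h3 : HasDerivAt (fun s => pd2 v (X (V, s), s))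
        (pd1 (pd2 v) (x, u) * pd2 X (V, u) + pd2 (pd2 v) (x, u) * 1) u :=
      chain2 hv2 (hXb u) (hasDerivAt_id u)
    have h4 : HasDerivAt (fun s => pd1 v (X (V, s), s) * pd2 X (V, s) + pd2 v (X (V, s), s)) _ u :=
      (h1.mul h2).add h3
    have heq : (fun s => pd1 v (X (V, s), s) * pd2 X (V, s) + pd2 v (X (V, s), s))
        = fun _ => (0:ℝ) := funext fun s => E2 s
    rw [heq] at h4
    have h5 := h4.unique (hasDerivAt_const u 0)
    linear_combination h5
  have hsym : pd1 (pd2 v) (x, u) = pd2 (pd1 v) (x, u) := mixed_symm hv (x, u)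
  have e5 : (pd1 (pd1 v) (x, u) * pd2 X (V, u) + pd2 (pd1 v) (x, u)) * pd2 X (V, u)
      + pd1 v (x, u) * pd2 (pd2 X) (V, u)
      + (pd2 (pd1 v) (x, u) * pd2 X (V, u) + pd2 (pd2 v) (x, u)) = 0 := by
    linear_combination e5raw - pd2 X (V, u) * hsym
  -- the PDE at the point (x, u), in pd-notation
  have pde : c u * ((pd1 v (x, u)) ^ 2 * pd2 (pd2 v) (x, u)
        - 2 * pd1 v (x, u) * pd2 v (x, u) * pd2 (pd1 v) (x, u)
        + pd1 (pd1 v) (x, u) * (pd2 v (x, u)) ^ 2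
        - (c u) ^ 2 * pd1 (pd1 v) (x, u))
      - 2 * deriv c u * (pd1 v (x, u)) ^ 2 * pd2 v (x, u) = 0 := hPDE x u
  -- apply the algebraic lemma
  have key : pd1 (pd1 X) (V, u)
      = -(2 * c u ^ 1 * deriv c u) / ((c u) ^ 2) ^ 2 * pd2 X (V, u)
        + ((c u) ^ 2)⁻¹ * pd2 (pd2 X) (V, u) := by
    refine wave_algebra (c u) (deriv c u) (pd1 v (x, u)) (pd2 v (x, u))
      (pd1 (pd1 v) (x, u)) (pd2 (pd1 v) (x, u)) (pd2 (pd2 v) (x, u))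
      (pd1 X (V, u)) (pd2 X (V, u)) (pd1 (pd1 X) (V, u)) (pd2 (pd2 X) (V, u))
      (hc0 u) (E1 V) (E2 u) (by linear_combination e3) (by linear_combination e5)
      (by linear_combination pde)
  -- compute the right-hand side of the goal
  have hcd : HasDerivAt c (deriv c u) u := ((hc.differentiable one_ne_zero) u).hasDerivAt
  have h1 : HasDerivAt (fun s => ((c s) ^ 2)⁻¹)
      (-((2:ℝ) * c u ^ 1 * deriv c u) / ((c u) ^ 2) ^ 2) u := by
    have : HasDerivAt (fun s => ((c s) ^ 2)⁻¹) _ u := (hcd.pow 2).inv (pow_ne_zero 2 (hc0 u))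
    simpa using this
  have h2 : HasDerivAt (fun s => deriv (fun r => X (V, r)) s) (pd2 (pd2 X) (V, u)) u :=
    hasDerivAt_pd2 hX2 (V, u)
  have hRHS : deriv (fun s => ((c s) ^ 2)⁻¹ * deriv (fun r => X (V, r)) s) u
      = -((2:ℝ) * c u ^ 1 * deriv c u) / ((c u) ^ 2) ^ 2 * pd2 X (V, u)
        + ((c u) ^ 2)⁻¹ * pd2 (pd2 X) (V, u) := (h1.mul h2).deriv
  show pd1 (pd1 X) (V, u) = _
  rw [hRHS]
  linear_combination key
end

section
/- Let c : ℝ → ℝ be a function. Let u, v : ℝ × ℝ → ℝ be continuously differentiable and satisfy the potential system v_x(x,t) = u_t(x,t) and v_t(x,t) = c(u(x,t))²·u_x(x,t) for all (x,t). Suppose τ : ℝ × ℝ → ℝ is continuously differentiable and satisfies u(X, τ(X,T)) = T for all (X,T). Define U(X,T) = τ(X,T) + v(X, τ(X,T)) and V(X,T) = v(X, τ(X,T)). Then for all (X,T): V_X·U_T − V_T·U_X = 1 and V_T + c(T)²·U_X − c(T)²·V_X = 0, where subscripts denote partial derivatives with respect to X and T. -/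
private lemma decompD (D : ℝ × ℝ →L[ℝ] ℝ) (a b : ℝ) :
    D (a, b) = a * D (1, 0) + b * D (0, 1) := by
  have h : (a, b) = a • ((1 : ℝ), (0 : ℝ)) + b • ((0 : ℝ), (1 : ℝ)) := by
    simp [Prod.ext_iff]
  rw [h, map_add, map_smul, map_smul, smul_eq_mul, smul_eq_mul]

private lemma partialX {f : ℝ × ℝ → ℝ} (hf : ContDiff ℝ 1 f) (x t : ℝ) :
    HasDerivAt (fun y => f (y, t)) (fderiv ℝ f (x, t) (1, 0)) x :=
  ((hf.differentiable one_ne_zero (x, t)).hasFDerivAt).comp_hasDerivAt x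
    ((hasDerivAt_id x).prodMk (hasDerivAt_const x t))

private lemma partialT {f : ℝ × ℝ → ℝ} (hf : ContDiff ℝ 1 f) (x t : ℝ) :
    HasDerivAt (fun s => f (x, s)) (fderiv ℝ f (x, t) (0, 1)) t :=
  ((hf.differentiable one_ne_zero (x, t)).hasFDerivAt).comp_hasDerivAt t
    ((hasDerivAt_const t x).prodMk (hasDerivAt_id t))

/-- The point transformation X = x, T = u, U = t + v, V = v maps the potential
system v_x = u_t, v_t = c²(u)u_x of the nonlinear wave equation into the system
V_X U_T − V_T U_X = 1, V_T + c²(T)U_X − c²(T)V_X = 0. -/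
theorem stmt_9 (c : ℝ → ℝ) (u v τ : ℝ × ℝ → ℝ)
    (hu : ContDiff ℝ 1 u) (hv : ContDiff ℝ 1 v) (hτ : ContDiff ℝ 1 τ)
    (hpot1 : ∀ x t : ℝ, deriv (fun y => v (y, t)) x = deriv (fun s => u (x, s)) t)
    (hpot2 : ∀ x t : ℝ, deriv (fun s => v (x, s)) t
      = (c (u (x, t))) ^ 2 * deriv (fun y => u (y, t)) x)
    (hτinv : ∀ X T : ℝ, u (X, τ (X, T)) = T) :
    let U : ℝ × ℝ → ℝ := fun p => τ p + v (p.1, τ p)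
    let V : ℝ × ℝ → ℝ := fun p => v (p.1, τ p)
    ∀ X T : ℝ,
      deriv (fun Y => V (Y, T)) X * deriv (fun S => U (X, S)) T
        - deriv (fun S => V (X, S)) T * deriv (fun Y => U (Y, T)) X = 1 ∧
      deriv (fun S => V (X, S)) T + (c T) ^ 2 * deriv (fun Y => U (Y, T)) X
        - (c T) ^ 2 * deriv (fun Y => V (Y, T)) X = 0 := by
  intro U V X T
  have hud := (hu.differentiable one_ne_zero (X, τ (X, T))).hasFDerivAt
  have hvd := (hv.differentiable one_ne_zero (X, τ (X, T))).hasFDerivAt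
  set Du := fderiv ℝ u (X, τ (X, T)) with hDu
  set Dv := fderiv ℝ v (X, τ (X, T)) with hDv
  set Dτ := fderiv ℝ τ (X, T) with hDτ
  set a := Dτ (1, 0) with ha
  set b := Dτ (0, 1) with hb
  set ux := Du (1, 0) with hux
  set ut := Du (0, 1) with hut
  set vx := Dv (1, 0) with hvx
  set vt := Dv (0, 1) with hvt
  -- τ partials
  have hτX : HasDerivAt (fun Y => τ (Y, T)) a X := partialX hτ X T
  have hτT : HasDerivAt (fun S => τ (X, S)) b T := partialT hτ X T
  -- inner maps
  have hgX : HasDerivAt (fun Y => ((Y, τ (Y, T)) : ℝ × ℝ)) (1, a) X :=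
    (hasDerivAt_id X).prodMk hτX
  have hgT : HasDerivAt (fun S => ((X, τ (X, S)) : ℝ × ℝ)) (0, b) T :=
    (hasDerivAt_const T X).prodMk hτT
  -- V partials
  have hVX : HasDerivAt (fun Y => V (Y, T)) (vx + a * vt) X := by
    have := hvd.comp_hasDerivAt X hgX
    rw [decompD] at this
    simpa [V, mul_comm, Function.comp_def] using this
  have hVT : HasDerivAt (fun S => V (X, S)) (b * vt) T := by
    have := hvd.comp_hasDerivAt T hgT
    rw [decompD] at this
    simpa [V, Function.comp_def] using this
  -- U partials
  have hUX : HasDerivAt (fun Y => U (Y, T)) (a + (vx + a * vt)) X := by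
    have := hτX.add hVX
    simpa [U, V, Pi.add_def] using this
  have hUT : HasDerivAt (fun S => U (X, S)) (b + b * vt) T := by
    have := hτT.add hVT
    simpa [U, V, Pi.add_def] using this
  -- constraints from u(X, τ(X,T)) = T
  have hcX : ux + a * ut = 0 := by
    have h1 : HasDerivAt (fun Y => u (Y, τ (Y, T))) (1 * ux + a * ut) X := by
      have := hud.comp_hasDerivAt X hgX
      rw [decompD] at this
      exact this
    have h2 : (fun Y => u (Y, τ (Y, T))) = fun _ => T := funext fun Y => hτinv Y T
    rw [h2] at h1
    have := h1.unique (hasDerivAt_const X T)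
    linarith [this]
  have hcT : b * ut = 1 := by
    have h1 : HasDerivAt (fun S => u (X, τ (X, S))) (0 * ux + b * ut) T := by
      have := hud.comp_hasDerivAt T hgT
      rw [decompD] at this
      exact this
    have h2 : (fun S => u (X, τ (X, S))) = fun S => S := funext fun S => hτinv X S
    rw [h2] at h1
    have := h1.unique (hasDerivAt_id T)
    linarith [this]
  -- potential system at (X, τ(X,T))
  have hp1 : vx = ut := by
    have h1 := (partialX hv X (τ (X, T))).deriv
    have h2 := (partialT hu X (τ (X, T))).deriv
    have := hpot1 X (τ (X, T))
    rw [h1, h2] at this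
    exact this
  have hp2 : vt = (c T) ^ 2 * ux := by
    have h1 := (partialT hv X (τ (X, T))).deriv
    have h2 := (partialX hu X (τ (X, T))).deriv
    have := hpot2 X (τ (X, T))
    rw [h1, h2, hτinv X T] at this
    exact this
  rw [hVX.deriv, hVT.deriv, hUX.deriv, hUT.deriv]
  have hut0 : ut ≠ 0 := fun h => by simp [h] at hcT
  have hkey : ux * b + a = 0 := by
    have h0 : ut * (ux * b + a) = 0 := by linear_combination ux * hcT + hcX
    exact (mul_eq_zero.mp h0).resolve_left hut0
  refine ⟨by linear_combination b * hp1 + hcT, by linear_combination b * hp2 + (c T) ^ 2 * hkey⟩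
end

section
/- Let c : ℝ → ℝ be continuously differentiable. Let U, V : ℝ × ℝ → ℝ (functions of (X,T)) be twice continuously differentiable and satisfy, for all (X,T), the system V_X·U_T − V_T·U_X − 1 = 0 and V_T + c(T)²·U_X − c(T)²·V_X = 0, and suppose U_T(X,T) − c(T)²·U_X(X,T) ≠ 0 for all (X,T). Then U satisfies, at every point (X,T), the scalar PDE U_TT + c(T)²·( c(T)²·U_XX − U_XX·U_T² − U_TT·U_X² − 2·U_TX + 2·U_TX·U_T·U_X ) − 2·c(T)·c'(T)·( U_X − U_X²·U_T ) = 0, where subscripts denote partial derivatives. -/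
private lemma derivX_eq (F : ℝ × ℝ → ℝ) (hF : Differentiable ℝ F) (X T : ℝ) :
    deriv (fun Y => F (Y, T)) X = fderiv ℝ F (X, T) (1, 0) := by
  have h := (hF (X, T)).hasFDerivAt.comp_hasDerivAt X
    (HasDerivAt.prodMk (hasDerivAt_id X) (hasDerivAt_const X T))
  exact h.deriv

private lemma derivT_eq (F : ℝ × ℝ → ℝ) (hF : Differentiable ℝ F) (X T : ℝ) :
    deriv (fun S => F (X, S)) T = fderiv ℝ F (X, T) (0, 1) := by
  have h := (hF (X, T)).hasFDerivAt.comp_hasDerivAt T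
    (HasDerivAt.prodMk (hasDerivAt_const T X) (hasDerivAt_id T))
  exact h.deriv

private lemma hasDerivAt_snd (F : ℝ × ℝ → ℝ) (hF : ContDiff ℝ 2 F) (X T : ℝ) (w : ℝ × ℝ) :
    HasDerivAt (fun S => fderiv ℝ F (X, S) w)
      (fderiv ℝ (fderiv ℝ F) (X, T) (0, 1) w) T := by
  have hΦ : Differentiable ℝ (fderiv ℝ F) :=
    (hF.fderiv_right (m := 1) le_rfl).differentiable one_ne_zero
  have h1 : HasDerivAt (fun S => fderiv ℝ F (X, S))
      (fderiv ℝ (fderiv ℝ F) (X, T) (0, 1)) T :=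
    (hΦ (X, T)).hasFDerivAt.comp_hasDerivAt T
      (HasDerivAt.prodMk (hasDerivAt_const T X) (hasDerivAt_id T))
  exact (ContinuousLinearMap.apply ℝ ℝ w).hasFDerivAt.comp_hasDerivAt T h1

private lemma hasDerivAt_fst (F : ℝ × ℝ → ℝ) (hF : ContDiff ℝ 2 F) (X T : ℝ) (w : ℝ × ℝ) :
    HasDerivAt (fun Y => fderiv ℝ F (Y, T) w)
      (fderiv ℝ (fderiv ℝ F) (X, T) (1, 0) w) X := by
  have hΦ : Differentiable ℝ (fderiv ℝ F) :=
    (hF.fderiv_right (m := 1) le_rfl).differentiable one_ne_zero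
  have h1 : HasDerivAt (fun Y => fderiv ℝ F (Y, T))
      (fderiv ℝ (fderiv ℝ F) (X, T) (1, 0)) X :=
    (hΦ (X, T)).hasFDerivAt.comp_hasDerivAt X
      (HasDerivAt.prodMk (hasDerivAt_id X) (hasDerivAt_const X T))
  exact (ContinuousLinearMap.apply ℝ ℝ w).hasFDerivAt.comp_hasDerivAt X h1

private lemma sym2 (F : ℝ × ℝ → ℝ) (hF : ContDiff ℝ 2 F) (p : ℝ × ℝ) (v w : ℝ × ℝ) :
    fderiv ℝ (fderiv ℝ F) p v w = fderiv ℝ (fderiv ℝ F) p w v := by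
  have hΦ : Differentiable ℝ (fderiv ℝ F) :=
    (hF.fderiv_right (m := 1) le_rfl).differentiable one_ne_zero
  exact second_derivative_symmetric
    (fun y => ((hF.differentiable (by norm_num)) y).hasFDerivAt)
    ((hΦ p).hasFDerivAt) v w

/-- Elimination of V from the system V_X U_T − V_T U_X = 1,
V_T + c²(T)U_X − c²(T)V_X = 0 yields the scalar PDE (3.56) for U. -/
theorem stmt_10 (c : ℝ → ℝ) (hc : ContDiff ℝ 1 c)
    (U V : ℝ × ℝ → ℝ) (hU : ContDiff ℝ 2 U) (hV : ContDiff ℝ 2 V)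
    (h1 : ∀ X T : ℝ, deriv (fun Y => V (Y, T)) X * deriv (fun S => U (X, S)) T
      - deriv (fun S => V (X, S)) T * deriv (fun Y => U (Y, T)) X - 1 = 0)
    (h2 : ∀ X T : ℝ, deriv (fun S => V (X, S)) T
      + (c T) ^ 2 * deriv (fun Y => U (Y, T)) X
      - (c T) ^ 2 * deriv (fun Y => V (Y, T)) X = 0)
    (hnd : ∀ X T : ℝ, deriv (fun S => U (X, S)) T
      - (c T) ^ 2 * deriv (fun Y => U (Y, T)) X ≠ 0) :
    ∀ X T : ℝ,
      deriv (deriv (fun S => U (X, S))) T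
      + (c T) ^ 2 * ((c T) ^ 2 * deriv (deriv (fun Y => U (Y, T))) X
          - deriv (deriv (fun Y => U (Y, T))) X * (deriv (fun S => U (X, S)) T) ^ 2
          - deriv (deriv (fun S => U (X, S))) T * (deriv (fun Y => U (Y, T)) X) ^ 2
          - 2 * deriv (fun S => deriv (fun Y => U (Y, S)) X) T
          + 2 * deriv (fun S => deriv (fun Y => U (Y, S)) X) T
              * deriv (fun S => U (X, S)) T * deriv (fun Y => U (Y, T)) X)
      - 2 * c T * deriv c T * (deriv (fun Y => U (Y, T)) X
          - (deriv (fun Y => U (Y, T)) X) ^ 2 * deriv (fun S => U (X, S)) T) = 0 := by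
  intro X T
  have hUd : Differentiable ℝ U := hU.differentiable (by norm_num)
  have hVd : Differentiable ℝ V := hV.differentiable (by norm_num)
  have hcT : HasDerivAt c (deriv c T) T := ((hc.differentiable one_ne_zero) T).hasDerivAt
  -- pointwise formulas for V's first derivatives
  have hndf : ∀ p : ℝ × ℝ,
      fderiv ℝ U p (0, 1) - (c p.2) ^ 2 * fderiv ℝ U p (1, 0) ≠ 0 := by
    intro p
    have := hnd p.1 p.2
    rwa [derivT_eq U hUd, derivX_eq U hUd] at this
  have hvX : ∀ p : ℝ × ℝ, fderiv ℝ V p (1, 0)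
      = (1 - (c p.2) ^ 2 * (fderiv ℝ U p (1, 0)) ^ 2)
        / (fderiv ℝ U p (0, 1) - (c p.2) ^ 2 * fderiv ℝ U p (1, 0)) := by
    intro ⟨x, t⟩
    have e1 := h1 x t
    have e2 := h2 x t
    simp only [derivT_eq U hUd, derivX_eq U hUd, derivT_eq V hVd, derivX_eq V hVd] at e1 e2
    rw [eq_div_iff (hndf (x, t))]
    linear_combination e1 + fderiv ℝ U (x, t) (1, 0) * e2
  have hvT : ∀ p : ℝ × ℝ, fderiv ℝ V p (0, 1)
      = (c p.2) ^ 2 * (1 - fderiv ℝ U p (1, 0) * fderiv ℝ U p (0, 1))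
        / (fderiv ℝ U p (0, 1) - (c p.2) ^ 2 * fderiv ℝ U p (1, 0)) := by
    intro ⟨x, t⟩
    have e1 := h1 x t
    have e2 := h2 x t
    simp only [derivT_eq U hUd, derivX_eq U hUd, derivT_eq V hVd, derivX_eq V hVd] at e1 e2
    rw [eq_div_iff (hndf (x, t))]
    linear_combination fderiv ℝ U (x, t) (0, 1) * e2 + (c t) ^ 2 * e1
  -- abbreviations
  set a := fderiv ℝ U (X, T) (1, 0) with ha
  set b := fderiv ℝ U (X, T) (0, 1) with hb
  set p := fderiv ℝ (fderiv ℝ U) (X, T) (1, 0) (1, 0) with hp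
  set q := fderiv ℝ (fderiv ℝ U) (X, T) (0, 1) (0, 1) with hq
  set m := fderiv ℝ (fderiv ℝ U) (X, T) (0, 1) (1, 0) with hm
  have hmm : fderiv ℝ (fderiv ℝ U) (X, T) (1, 0) (0, 1) = m := (sym2 U hU _ _ _)
  have hDne : b - (c T) ^ 2 * a ≠ 0 := hndf (X, T)
  -- HasDerivAt facts for U's first derivatives
  have hgX : HasDerivAt (fun S => fderiv ℝ U (X, S) (1, 0)) m T := hasDerivAt_snd U hU X T _
  have hgT : HasDerivAt (fun S => fderiv ℝ U (X, S) (0, 1)) q T := hasDerivAt_snd U hU X T _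
  have hhX : HasDerivAt (fun Y => fderiv ℝ U (Y, T) (1, 0)) p X := hasDerivAt_fst U hU X T _
  have hhT : HasDerivAt (fun Y => fderiv ℝ U (Y, T) (0, 1)) m X := by
    have := hasDerivAt_fst U hU X T (0, 1); rwa [hmm] at this
  -- T-direction: derivative of vX
  have hc2 : HasDerivAt (fun S => (c S) ^ 2) (2 * c T ^ 1 * deriv c T) T := by
    simpa using hcT.fun_pow 2
  have hNum : HasDerivAt (fun S => 1 - (c S) ^ 2 * (fderiv ℝ U (X, S) (1, 0)) ^ 2)
      (-((2 * c T ^ 1 * deriv c T) * a ^ 2 + (c T) ^ 2 * (2 * a ^ 1 * m))) T := by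
    have := (hc2.mul (hgX.pow 2)).const_sub 1
    simpa [mul_comm, mul_assoc] using this
  have hDen : HasDerivAt
      (fun S => fderiv ℝ U (X, S) (0, 1) - (c S) ^ 2 * fderiv ℝ U (X, S) (1, 0))
      (q - ((2 * c T ^ 1 * deriv c T) * a + (c T) ^ 2 * m)) T := by
    exact hgT.sub (hc2.mul hgX)
  have hQuotT := hNum.div hDen hDne
  have funeqT : (fun S => fderiv ℝ V (X, S) (1, 0))
      = fun S => (1 - (c S) ^ 2 * (fderiv ℝ U (X, S) (1, 0)) ^ 2)
        / (fderiv ℝ U (X, S) (0, 1) - (c S) ^ 2 * fderiv ℝ U (X, S) (1, 0)) := by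
    funext S; exact hvX (X, S)
  have dT1 : deriv (fun S => fderiv ℝ V (X, S) (1, 0)) T
      = fderiv ℝ (fderiv ℝ V) (X, T) (0, 1) (1, 0) := (hasDerivAt_snd V hV X T _).deriv
  have dT2 := hQuotT.deriv
  rw [funeqT] at dT1
  -- X-direction: derivative of vT
  have hNumX : HasDerivAt
      (fun Y => (c T) ^ 2 * (1 - fderiv ℝ U (Y, T) (1, 0) * fderiv ℝ U (Y, T) (0, 1)))
      ((c T) ^ 2 * (-(p * b + a * m))) X := by
    have := ((hhX.mul hhT).const_sub 1).const_mul ((c T) ^ 2)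
    simpa [mul_comm, mul_assoc, sub_eq_add_neg] using this
  have hDenX : HasDerivAt
      (fun Y => fderiv ℝ U (Y, T) (0, 1) - (c T) ^ 2 * fderiv ℝ U (Y, T) (1, 0))
      (m - (c T) ^ 2 * p) X := hhT.sub (hhX.const_mul _)
  have hQuotX := hNumX.div hDenX hDne
  have funeqX : (fun Y => fderiv ℝ V (Y, T) (0, 1))
      = fun Y => (c T) ^ 2 * (1 - fderiv ℝ U (Y, T) (1, 0) * fderiv ℝ U (Y, T) (0, 1))
        / (fderiv ℝ U (Y, T) (0, 1) - (c T) ^ 2 * fderiv ℝ U (Y, T) (1, 0)) := by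
    funext Y; exact hvT (Y, T)
  have dX1 : deriv (fun Y => fderiv ℝ V (Y, T) (0, 1)) X
      = fderiv ℝ (fderiv ℝ V) (X, T) (1, 0) (0, 1) := (hasDerivAt_fst V hV X T _).deriv
  have dX2 := hQuotX.deriv
  rw [funeqX] at dX1
  -- symmetry for V and the main equation
  have hVsym : fderiv ℝ (fderiv ℝ V) (X, T) (0, 1) (1, 0)
      = fderiv ℝ (fderiv ℝ V) (X, T) (1, 0) (0, 1) := sym2 V hV _ _ _
  have key := dT2.symm.trans (dT1.trans (hVsym.trans (dX1.symm.trans dX2)))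
  have e1 : deriv (fun S => U (X, S)) = fun S => fderiv ℝ U (X, S) (0, 1) :=
    funext fun S => derivT_eq U hUd X S
  have e2 : deriv (fun Y => U (Y, T)) = fun Y => fderiv ℝ U (Y, T) (1, 0) :=
    funext fun Y => derivX_eq U hUd Y T
  have e3 : (fun S => deriv (fun Y => U (Y, S)) X) = fun S => fderiv ℝ U (X, S) (1, 0) :=
    funext fun S => derivX_eq U hUd X S
  simp only [e1, e2, e3]
  rw [hgT.deriv, hhX.deriv, hgX.deriv, ← ha, ← hb]
  rw [← ha, ← hb] at key
  field_simp at key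
  linear_combination -key
end

section
/- Let ε ∈ ℝ and let u : ℝ × ℝ → ℝ be a twice continuously differentiable solution with u(x,t) > 0 for all (x,t) of u_t(x,t) = u_xx(x,t) + u(x,t)·ln(u(x,t)) for all (x,t). Define ũ(x,t) = u(x,t)·exp(ε·e^t). Then ũ(x,t) > 0 and ũ_t(x,t) = ũ_xx(x,t) + ũ(x,t)·ln(ũ(x,t)) for all (x,t). -/
/-- The point symmetry X₅ of u_t = u_xx + u ln u maps positive solutions to
positive solutions: if u > 0 solves the equation then so does
ũ(x,t) = u(x,t)·exp(ε·eᵗ). -/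
theorem stmt_13 (ε : ℝ) (u : ℝ × ℝ → ℝ) (hu : ContDiff ℝ 2 u)
    (hpos : ∀ x t : ℝ, 0 < u (x, t))
    (hPDE : ∀ x t : ℝ, deriv (fun s => u (x, s)) t
      = deriv (deriv (fun y => u (y, t))) x + u (x, t) * Real.log (u (x, t))) :
    let w : ℝ × ℝ → ℝ := fun p => u p * Real.exp (ε * Real.exp p.2)
    ∀ x t : ℝ, 0 < w (x, t) ∧ deriv (fun s => w (x, s)) t
      = deriv (deriv (fun y => w (y, t))) x + w (x, t) * Real.log (w (x, t)) := by
  intro w x t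
  have hupos := hpos x t
  have hwpos : 0 < w (x, t) := mul_pos hupos (Real.exp_pos _)
  refine ⟨hwpos, ?_⟩
  have hud : Differentiable ℝ u := hu.differentiable two_ne_zero
  -- t-derivative of u
  have hut : DifferentiableAt ℝ (fun s => u (x, s)) t :=
    (hud _).comp t ((differentiableAt_const x).prodMk differentiableAt_id)
  -- derivative of exp(ε exp s)
  have hE : HasDerivAt (fun s : ℝ => Real.exp (ε * Real.exp s))
      (Real.exp (ε * Real.exp t) * (ε * Real.exp t)) t := by
    have h1 : HasDerivAt (fun s : ℝ => ε * Real.exp s) (ε * Real.exp t) t :=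
      (Real.hasDerivAt_exp t).const_mul ε
    exact h1.exp
  -- LHS
  have hL : deriv (fun s => w (x, s)) t
      = deriv (fun s => u (x, s)) t * Real.exp (ε * Real.exp t)
        + u (x, t) * (Real.exp (ε * Real.exp t) * (ε * Real.exp t)) := by
    have : deriv (fun s => w (x, s)) t
        = deriv (fun s => u (x, s) * Real.exp (ε * Real.exp s)) t := rfl
    rw [this, deriv_fun_mul hut hE.differentiableAt, hE.deriv]
  -- second x-derivative
  have hX : deriv (deriv (fun y => w (y, t))) x
      = deriv (deriv (fun y => u (y, t))) x * Real.exp (ε * Real.exp t) := by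
    have h1 : (fun y => w (y, t)) = fun y => u (y, t) * Real.exp (ε * Real.exp t) := rfl
    rw [h1, deriv_mul_const_field', deriv_mul_const_field']
  -- log of w
  have hlog : Real.log (w (x, t)) = Real.log (u (x, t)) + ε * Real.exp t := by
    show Real.log (u (x, t) * Real.exp (ε * Real.exp t)) = _
    rw [Real.log_mul (ne_of_gt hupos) (Real.exp_ne_zero _), Real.log_exp]
  rw [hL, hX, hlog, hPDE x t]
  show (deriv (deriv fun y => u (y, t)) x + u (x, t) * Real.log (u (x, t)))
      * Real.exp (ε * Real.exp t) + _ = _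
  ring
end

section
/- Let ε ∈ ℝ and let u : ℝ × ℝ → ℝ be a twice continuously differentiable solution with u(x,t) > 0 for all (x,t) of u_t(x,t) = u_xx(x,t) + u(x,t)·ln(u(x,t)) for all (x,t). Define ũ(x,t) = u(x − 2ε·e^t, t)·exp(−ε·e^t·x + ε²·e^{2t}). Then ũ(x,t) > 0 and ũ_t(x,t) = ũ_xx(x,t) + ũ(x,t)·ln(ũ(x,t)) for all (x,t). -/
open Real

private lemma line_deriv {v : ℝ × ℝ → ℝ} (hv : Differentiable ℝ v) {f g : ℝ → ℝ}
    {f' g' s : ℝ} (hf : HasDerivAt f f' s) (hg : HasDerivAt g g' s) :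
    HasDerivAt (fun r => v (f r, g r)) (fderiv ℝ v (f s, g s) (f', g')) s :=
  (hv (f s, g s)).hasFDerivAt.comp_hasDerivAt s (hf.prodMk hg)

/-- The point symmetry X₆ of u_t = u_xx + u ln u maps positive solutions to
positive solutions: if u > 0 solves the equation then so does
ũ(x,t) = u(x − 2ε·eᵗ, t)·exp(−ε·eᵗ·x + ε²·e^{2t}). -/
theorem stmt_14 (ε : ℝ) (u : ℝ × ℝ → ℝ) (hu : ContDiff ℝ 2 u)
    (hpos : ∀ x t : ℝ, 0 < u (x, t))
    (hPDE : ∀ x t : ℝ, deriv (fun s => u (x, s)) t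
      = deriv (deriv (fun y => u (y, t))) x + u (x, t) * Real.log (u (x, t))) :
    let w : ℝ × ℝ → ℝ := fun p =>
      u (p.1 - 2 * ε * Real.exp p.2, p.2)
        * Real.exp (-ε * Real.exp p.2 * p.1 + ε ^ 2 * Real.exp (2 * p.2))
    ∀ x t : ℝ, 0 < w (x, t) ∧ deriv (fun s => w (x, s)) t
      = deriv (deriv (fun y => w (y, t))) x + w (x, t) * Real.log (w (x, t)) := by
  intro w x t
  have hud : Differentiable ℝ u := hu.differentiable (by norm_num)
  set ux : ℝ × ℝ → ℝ := fun q => fderiv ℝ u q (1, 0) with hux_def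
  have huxd : Differentiable ℝ ux := by
    have h : ContDiff ℝ 1 (fderiv ℝ u) := hu.fderiv_right (by norm_num)
    exact (h.clm_apply contDiff_const).differentiable one_ne_zero
  have hx : ∀ x t : ℝ, HasDerivAt (fun y => u (y, t)) (ux (x, t)) x := by
    intro x t
    have h := line_deriv hud (hasDerivAt_id x) (hasDerivAt_const x t)
    simpa using h
  have hxx : ∀ x t : ℝ, deriv (deriv (fun y => u (y, t))) x
      = fderiv ℝ ux (x, t) (1, 0) := by
    intro x t
    have h1 : deriv (fun y => u (y, t)) = fun y => ux (y, t) :=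
      funext fun y => (hx y t).deriv
    rw [h1]
    have h := line_deriv huxd (hasDerivAt_id x) (hasDerivAt_const x t)
    simpa using h.deriv
  have ht : ∀ x t : ℝ, deriv (fun s => u (x, s)) t = fderiv ℝ u (x, t) (0, 1) := by
    intro x t
    have h := line_deriv hud (f := fun _ => x) (hasDerivAt_const t x) (hasDerivAt_id t)
    simpa using h.deriv
  have hPDE' : ∀ x t : ℝ, fderiv ℝ u (x, t) (0, 1)
      = fderiv ℝ ux (x, t) (1, 0) + u (x, t) * Real.log (u (x, t)) := by
    intro x t
    rw [← ht, ← hxx]; exact hPDE x t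
  refine ⟨mul_pos (hpos _ _) (Real.exp_pos _), ?_⟩
  -- time derivative of w
  have hf : HasDerivAt (fun s => x - 2 * ε * Real.exp s) (-(2 * ε * Real.exp t)) t := by
    simpa using ((Real.hasDerivAt_exp t).const_mul (2 * ε)).const_sub x
  have hφ : HasDerivAt (fun s => -ε * Real.exp s * x + ε ^ 2 * Real.exp (2 * s))
      (-ε * Real.exp t * x + ε ^ 2 * (Real.exp (2 * t) * 2)) t := by
    have h2s : HasDerivAt (fun s : ℝ => 2 * s) 2 t := by
      simpa using (hasDerivAt_id t).const_mul 2
    exact (((Real.hasDerivAt_exp t).const_mul (-ε)).mul_const x).add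
      ((h2s.exp).const_mul (ε ^ 2))
  have hwt : HasDerivAt (fun s => w (x, s))
      (fderiv ℝ u (x - 2 * ε * Real.exp t, t) (-(2 * ε * Real.exp t), 1)
          * Real.exp (-ε * Real.exp t * x + ε ^ 2 * Real.exp (2 * t))
        + u (x - 2 * ε * Real.exp t, t)
          * (Real.exp (-ε * Real.exp t * x + ε ^ 2 * Real.exp (2 * t))
              * (-ε * Real.exp t * x + ε ^ 2 * (Real.exp (2 * t) * 2)))) t := by
    exact (line_deriv hud hf (hasDerivAt_id t)).mul hφ.exp
  -- first x-derivative of w, at every point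
  have hψ : ∀ y : ℝ, HasDerivAt
      (fun y' => -ε * Real.exp t * y' + ε ^ 2 * Real.exp (2 * t)) (-ε * Real.exp t) y := by
    intro y
    simpa using ((hasDerivAt_id y).const_mul (-ε * Real.exp t)).add_const
      (ε ^ 2 * Real.exp (2 * t))
  have hwx : ∀ y : ℝ, HasDerivAt (fun y' => w (y', t))
      (fderiv ℝ u (y - 2 * ε * Real.exp t, t) (1, 0)
          * Real.exp (-ε * Real.exp t * y + ε ^ 2 * Real.exp (2 * t))
        + u (y - 2 * ε * Real.exp t, t)
          * (Real.exp (-ε * Real.exp t * y + ε ^ 2 * Real.exp (2 * t))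
              * (-ε * Real.exp t))) y := by
    intro y
    have hf2 : HasDerivAt (fun y' : ℝ => y' - 2 * ε * Real.exp t) 1 y :=
      (hasDerivAt_id y).sub_const _
    exact (line_deriv hud hf2 (hasDerivAt_const y t)).mul (hψ y).exp
  have hD1 : deriv (fun y' => w (y', t)) = fun y =>
      fderiv ℝ u (y - 2 * ε * Real.exp t, t) (1, 0)
          * Real.exp (-ε * Real.exp t * y + ε ^ 2 * Real.exp (2 * t))
        + u (y - 2 * ε * Real.exp t, t)
          * (Real.exp (-ε * Real.exp t * y + ε ^ 2 * Real.exp (2 * t))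
              * (-ε * Real.exp t)) :=
    funext fun y => (hwx y).deriv
  -- second x-derivative of w at x
  have hf2x : HasDerivAt (fun y' : ℝ => y' - 2 * ε * Real.exp t) 1 x :=
    (hasDerivAt_id x).sub_const _
  have hstep2 : HasDerivAt (fun y =>
      fderiv ℝ u (y - 2 * ε * Real.exp t, t) (1, 0)
          * Real.exp (-ε * Real.exp t * y + ε ^ 2 * Real.exp (2 * t))
        + u (y - 2 * ε * Real.exp t, t)
          * (Real.exp (-ε * Real.exp t * y + ε ^ 2 * Real.exp (2 * t))
              * (-ε * Real.exp t)))
      (fderiv ℝ ux (x - 2 * ε * Real.exp t, t) (1, 0)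
          * Real.exp (-ε * Real.exp t * x + ε ^ 2 * Real.exp (2 * t))
        + fderiv ℝ u (x - 2 * ε * Real.exp t, t) (1, 0)
          * (Real.exp (-ε * Real.exp t * x + ε ^ 2 * Real.exp (2 * t))
              * (-ε * Real.exp t))
        + (fderiv ℝ u (x - 2 * ε * Real.exp t, t) (1, 0)
            * (Real.exp (-ε * Real.exp t * x + ε ^ 2 * Real.exp (2 * t))
                * (-ε * Real.exp t))
          + u (x - 2 * ε * Real.exp t, t)
            * (Real.exp (-ε * Real.exp t * x + ε ^ 2 * Real.exp (2 * t))
                * (-ε * Real.exp t) * (-ε * Real.exp t)))) x := by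
    have hA := (line_deriv huxd hf2x (hasDerivAt_const x t)).mul (hψ x).exp
    have hB := (line_deriv hud hf2x (hasDerivAt_const x t)).mul
      ((hψ x).exp.mul_const (-ε * Real.exp t))
    exact hA.add hB
  have hw0 : w (x, t) = u (x - 2 * ε * Real.exp t, t)
      * Real.exp (-ε * Real.exp t * x + ε ^ 2 * Real.exp (2 * t)) := rfl
  have hlin : fderiv ℝ u (x - 2 * ε * Real.exp t, t) (-(2 * ε * Real.exp t), 1)
      = -(2 * ε * Real.exp t) * fderiv ℝ u (x - 2 * ε * Real.exp t, t) (1, 0)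
        + fderiv ℝ u (x - 2 * ε * Real.exp t, t) (0, 1) := by
    have hv : ((-(2 * ε * Real.exp t), 1) : ℝ × ℝ)
        = (-(2 * ε * Real.exp t)) • ((1 : ℝ), (0 : ℝ)) + ((0 : ℝ), (1 : ℝ)) := by
      simp [Prod.ext_iff]
    rw [hv, map_add, map_smul, smul_eq_mul]
  rw [hwt.deriv, hD1, hstep2.deriv, hw0, hlin, hPDE',
    Real.log_mul (ne_of_gt (hpos _ _)) (Real.exp_ne_zero _), Real.log_exp]
  have hE2t : Real.exp (2 * t) = Real.exp t * Real.exp t := by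
    rw [two_mul, Real.exp_add]
  rw [hE2t]
  ring
end

section
/- Let ε ∈ ℝ and let u : ℝ × ℝ → ℝ be a twice continuously differentiable function with u(x,t) ≠ 0 for all (x,t) satisfying the nonlinear wave equation u_tt(x,t) = ∂/∂x [ u(x,t)⁻⁴·u_x(x,t) ] for all (x,t). Define ũ(x,t) = (1 + ε·t)·u(x, t/(1 + ε·t)) for (x,t) with 1 + ε·t ≠ 0. Then at every point (x,t) with 1 + ε·t ≠ 0, ũ satisfies ũ_tt(x,t) = ∂/∂x [ ũ(x,t)⁻⁴·ũ_x(x,t) ]. -/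
/-- The point symmetry X₆ = t²∂/∂t + tu∂/∂u of the nonlinear wave equation
u_tt = (u⁻⁴u_x)_x maps nonvanishing solutions to solutions on the domain where
1 + εt ≠ 0: ũ(x,t) = (1 + εt)u(x, t/(1 + εt)) is again a solution there. -/
theorem stmt_15 (ε : ℝ) (u : ℝ × ℝ → ℝ) (hu : ContDiff ℝ 2 u)
    (hne : ∀ x t : ℝ, u (x, t) ≠ 0)
    (hPDE : ∀ x t : ℝ, deriv (deriv (fun s => u (x, s))) t
      = deriv (fun y => (u (y, t) ^ 4)⁻¹ * deriv (fun z => u (z, t)) y) x) :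
    let w : ℝ × ℝ → ℝ := fun p => (1 + ε * p.2) * u (p.1, p.2 / (1 + ε * p.2))
    ∀ x t : ℝ, 1 + ε * t ≠ 0 →
      deriv (deriv (fun s => w (x, s))) t
        = deriv (fun y => (w (y, t) ^ 4)⁻¹ * deriv (fun z => w (z, t)) y) x := by
  intro w x t hat
  have hw : ∀ p : ℝ × ℝ, w p = (1 + ε * p.2) * u (p.1, p.2 / (1 + ε * p.2)) := fun p => rfl
  have hud : Differentiable ℝ u := hu.differentiable (by norm_num)
  set ut : ℝ × ℝ → ℝ := fun p => fderiv ℝ u p (0, 1) with hut_def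
  have hutC : ContDiff ℝ 1 ut :=
    (ContinuousLinearMap.apply ℝ ℝ ((0:ℝ), (1:ℝ))).contDiff.comp
      (hu.fderiv_right (m := 1) (by norm_num))
  have hutd : Differentiable ℝ ut := hutC.differentiable (by norm_num)
  have hut : ∀ y s : ℝ, HasDerivAt (fun r => u (y, r)) (ut (y, s)) s := fun y s =>
    (hud (y, s)).hasFDerivAt.comp_hasDerivAt s ((hasDerivAt_const s y).prodMk (hasDerivAt_id s))
  have hutt : ∀ y s : ℝ, HasDerivAt (fun r => ut (y, r)) (fderiv ℝ ut (y, s) (0, 1)) s :=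
    fun y s =>
    (hutd (y, s)).hasFDerivAt.comp_hasDerivAt s ((hasDerivAt_const s y).prodMk (hasDerivAt_id s))
  have hσ : ∀ s : ℝ, 1 + ε * s ≠ 0 →
      HasDerivAt (fun r : ℝ => r / (1 + ε * r)) (1 / (1 + ε * s) ^ 2) s := by
    intro s hs
    have h := (hasDerivAt_id s).div (((hasDerivAt_id s).const_mul ε).const_add 1) hs
    refine h.congr_deriv ?_
    simp only [id]
    field_simp
    ring
  have hD1 : ∀ s : ℝ, 1 + ε * s ≠ 0 →
      HasDerivAt (fun r : ℝ => (1 + ε * r) * u (x, r / (1 + ε * r)))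
        (ε * u (x, s / (1 + ε * s)) + ut (x, s / (1 + ε * s)) / (1 + ε * s)) s := by
    intro s hs
    have hcomp : HasDerivAt (fun r : ℝ => u (x, r / (1 + ε * r)))
        (ut (x, s / (1 + ε * s)) * (1 / (1 + ε * s) ^ 2)) s :=
      (hut x _).comp s (hσ s hs)
    have h := (((hasDerivAt_id s).const_mul ε).const_add 1).mul hcomp
    refine h.congr_deriv ?_
    simp only [id]
    field_simp
  have hS : IsOpen {s : ℝ | 1 + ε * s ≠ 0} :=
    isOpen_ne.preimage (by continuity : Continuous fun s : ℝ => 1 + ε * s)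
  have hev : (deriv fun s => w (x, s)) =ᶠ[nhds t]
      fun s => ε * u (x, s / (1 + ε * s)) + ut (x, s / (1 + ε * s)) / (1 + ε * s) := by
    filter_upwards [hS.mem_nhds hat] with s hs
    have : (fun s => w (x, s)) = fun r : ℝ => (1 + ε * r) * u (x, r / (1 + ε * r)) := by
      funext r; exact hw (x, r)
    rw [this]
    exact (hD1 s hs).deriv
  set a : ℝ := 1 + ε * t with ha_def
  set τ : ℝ := t / a with hτ_def
  have hcomp1 : HasDerivAt (fun s : ℝ => u (x, s / (1 + ε * s))) (ut (x, τ) * (1 / a ^ 2)) t :=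
    by have := (hut x τ).comp t (hσ t hat); exact this
  have hcomp2 : HasDerivAt (fun s : ℝ => ut (x, s / (1 + ε * s)))
      (fderiv ℝ ut (x, τ) (0, 1) * (1 / a ^ 2)) t :=
    by have := (hutt x τ).comp t (hσ t hat); exact this
  have hlin : HasDerivAt (fun s : ℝ => 1 + ε * s) (ε * 1) t :=
    ((hasDerivAt_id t).const_mul ε).const_add 1
  have hD2 : HasDerivAt
      (fun s => ε * u (x, s / (1 + ε * s)) + ut (x, s / (1 + ε * s)) / (1 + ε * s))
      (ε * (ut (x, τ) * (1 / a ^ 2)) +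
        ((fderiv ℝ ut (x, τ) (0, 1) * (1 / a ^ 2)) * a - ut (x, τ) * (ε * 1)) / a ^ 2) t :=
    (hcomp1.const_mul ε).add (hcomp2.div hlin hat)
  have hL : deriv (deriv fun s => w (x, s)) t =
      ε * (ut (x, τ) * (1 / a ^ 2)) +
        ((fderiv ℝ ut (x, τ) (0, 1) * (1 / a ^ 2)) * a - ut (x, τ) * (ε * 1)) / a ^ 2 :=
    hev.deriv_eq.trans hD2.deriv
  -- RHS
  have hRW : (fun y => (w (y, t) ^ 4)⁻¹ * deriv (fun z => w (z, t)) y)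
      = fun y => (a ^ 3)⁻¹ * ((u (y, τ) ^ 4)⁻¹ * deriv (fun z => u (z, τ)) y) := by
    funext y
    have h1 : deriv (fun z => w (z, t)) y = a * deriv (fun z => u (z, τ)) y := by
      have : (fun z => w (z, t)) = fun z => a * u (z, τ) := by
        funext z; exact hw (z, t)
      rw [this, deriv_const_mul_field]
    rw [h1, hw]
    have hu0 : u (y, τ) ≠ 0 := hne y τ
    change ((a * u (y, τ)) ^ 4)⁻¹ * (a * deriv (fun z => u (z, τ)) y) = _
    field_simp
  have hsecond : deriv (deriv fun s => u (x, s)) τ = fderiv ℝ ut (x, τ) (0, 1) := by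
    have h1 : (deriv fun s => u (x, s)) = fun s => ut (x, s) :=
      funext fun s => (hut x s).deriv
    rw [h1]
    exact (hutt x τ).deriv
  rw [hL, hRW, deriv_const_mul_field, ← hPDE x τ, hsecond]
  field_simp
  ring
end

section
/- Let ε ∈ ℝ and let u : ℝ × ℝ → ℝ be a twice continuously differentiable function with u(x,t) > 0 for all (x,t) satisfying the nonlinear wave equation u_tt(x,t) = ∂/∂x [ u(x,t)^{−4/3}·u_x(x,t) ] for all (x,t). Define ũ(x,t) = (1 + ε·x)⁻³·u(x/(1 + ε·x), t) for (x,t) with 1 + ε·x > 0. Then at every point (x,t) with 1 + ε·x > 0, ũ(x,t) > 0 and ũ satisfies ũ_tt(x,t) = ∂/∂x [ ũ(x,t)^{−4/3}·ũ_x(x,t) ]. -/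
/-- The point symmetry X₇ = x²∂/∂x − 3xu∂/∂u of the nonlinear wave equation
u_tt = (u^{−4/3}u_x)_x maps positive solutions to positive solutions on the
domain where 1 + εx > 0: ũ(x,t) = (1 + εx)⁻³u(x/(1 + εx), t) is again a positive
solution there. -/
theorem stmt_16 (ε : ℝ) (u : ℝ × ℝ → ℝ) (hu : ContDiff ℝ 2 u)
    (hpos : ∀ x t : ℝ, 0 < u (x, t))
    (hPDE : ∀ x t : ℝ, deriv (deriv (fun s => u (x, s))) t
      = deriv (fun y => u (y, t) ^ (-(4 : ℝ) / 3) * deriv (fun z => u (z, t)) y) x) :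
    let w : ℝ × ℝ → ℝ := fun p => ((1 + ε * p.1) ^ 3)⁻¹ * u (p.1 / (1 + ε * p.1), p.2)
    ∀ x t : ℝ, 0 < 1 + ε * x →
      0 < w (x, t) ∧
      deriv (deriv (fun s => w (x, s))) t
        = deriv (fun y => w (y, t) ^ (-(4 : ℝ) / 3) * deriv (fun z => w (z, t)) y) x := by
  intro w x t hx
  have hupos := hpos (x / (1 + ε * x)) t
  constructor
  · show 0 < ((1 + ε * x) ^ 3)⁻¹ * u (x / (1 + ε * x), t)
    positivity
  -- slice in x at fixed t
  set f : ℝ → ℝ := fun y => u (y, t) with hf_def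
  have hf : ContDiff ℝ 2 f := hu.comp (contDiff_id.prodMk contDiff_const)
  have hfd : Differentiable ℝ f := hf.differentiable (by norm_num)
  have hf' : ContDiff ℝ 1 (deriv f) := by
    have := (contDiff_succ_iff_deriv (n := 1)).mp (by exact_mod_cast hf)
    exact this.2.2
  have hf'd : Differentiable ℝ (deriv f) := hf'.differentiable one_ne_zero
  have hfd' : ∀ z, HasDerivAt f (deriv f z) z := fun z => (hfd z).hasDerivAt
  set φ : ℝ → ℝ := fun y => y / (1 + ε * y) with hφ_def
  have hFpos : ∀ y, 0 < f (φ y) := fun y => hpos (φ y) t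
  have ha : ∀ y : ℝ, HasDerivAt (fun y => 1 + ε * y) ε y := by
    intro y
    simpa using ((hasDerivAt_id y).const_mul ε).const_add 1
  have hφ : ∀ y : ℝ, 0 < 1 + ε * y → HasDerivAt φ (((1 + ε * y) ^ 2)⁻¹) y := by
    intro y hy
    have h : HasDerivAt (fun y => y / (1 + ε * y)) _ y := (hasDerivAt_id' y).div (ha y) hy.ne'
    convert h using 1
    field_simp
    ring
  set W : ℝ → ℝ := fun y => ((1 + ε * y) ^ 3)⁻¹ * f (φ y) with hW_def
  set E : ℝ → ℝ := fun y => -((3 : ℕ) * (1 + ε * y) ^ (3 - 1) * ε) / ((1 + ε * y) ^ 3) ^ 2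
      * f (φ y) + ((1 + ε * y) ^ 3)⁻¹ * (deriv f (φ y) * ((1 + ε * y) ^ 2)⁻¹) with hE_def
  have hW : ∀ y : ℝ, 0 < 1 + ε * y → HasDerivAt W (E y) y := by
    intro y hy
    exact (((ha y).pow 3).inv (pow_ne_zero _ hy.ne')).mul ((hfd' (φ y)).comp y (hφ y hy))
  have hopen : IsOpen {y : ℝ | 0 < 1 + ε * y} :=
    isOpen_lt continuous_const (by continuity)
  have hmem : {y : ℝ | 0 < 1 + ε * y} ∈ nhds x := hopen.mem_nhds hx
  set H : ℝ → ℝ := fun y => -(3 * ε) * f (φ y) ^ (-(1 : ℝ) / 3)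
      + (1 + ε * y)⁻¹ * (f (φ y) ^ (-(4 : ℝ) / 3) * deriv f (φ y)) with hH_def
  have hG : (fun y => W y ^ (-(4 : ℝ) / 3) * deriv W y) =ᶠ[nhds x] H := by
    filter_upwards [hmem] with y hy
    have hy : 0 < 1 + ε * y := hy
    have hWy : deriv W y = E y := (hW y hy).deriv
    have hFp := hFpos y
    have key : W y ^ (-(4 : ℝ) / 3) = (1 + ε * y) ^ 4 * f (φ y) ^ (-(4 : ℝ) / 3) := by
      rw [show W y = ((1 + ε * y) ^ 3)⁻¹ * f (φ y) from rfl,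
        Real.mul_rpow (by positivity) hFp.le]
      congr 1
      rw [← Real.rpow_natCast (1 + ε * y) 3, ← Real.rpow_neg hy.le, ← Real.rpow_mul hy.le,
        ← Real.rpow_natCast (1 + ε * y) 4]
      norm_num
    have hFF : f (φ y) ^ (-(4 : ℝ) / 3) * f (φ y) = f (φ y) ^ (-(1 : ℝ) / 3) := by
      nth_rewrite 2 [← Real.rpow_one (f (φ y))]
      rw [← Real.rpow_add hFp]
      norm_num
    have hHy : H y = -(3 * ε) * f (φ y) ^ (-(1 : ℝ) / 3)
        + (1 + ε * y)⁻¹ * (f (φ y) ^ (-(4 : ℝ) / 3) * deriv f (φ y)) := rfl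
    have hEy : E y = -((3 : ℕ) * (1 + ε * y) ^ (3 - 1) * ε) / ((1 + ε * y) ^ 3) ^ 2
        * f (φ y) + ((1 + ε * y) ^ 3)⁻¹ * (deriv f (φ y) * ((1 + ε * y) ^ 2)⁻¹) := rfl
    rw [hWy, key, hHy, ← hFF, hEy]
    have hane : (1 + ε * y) ≠ 0 := hy.ne'
    push_cast
    field_simp
  -- restate goal via W
  show deriv (deriv (fun s => ((1 + ε * x) ^ 3)⁻¹ * u (φ x, s))) t
      = deriv (fun y => W y ^ (-(4 : ℝ) / 3) * deriv W y) x
  -- t-derivatives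
  have hh : ContDiff ℝ 2 (fun s => u (φ x, s)) := hu.comp (contDiff_const.prodMk contDiff_id)
  have hhd : Differentiable ℝ (fun s => u (φ x, s)) := hh.differentiable (by norm_num)
  have hh' : ContDiff ℝ 1 (deriv (fun s => u (φ x, s))) := by
    have := (contDiff_succ_iff_deriv (n := 1)).mp (by exact_mod_cast hh)
    exact this.2.2
  have e1 : deriv (fun s => ((1 + ε * x) ^ 3)⁻¹ * u (φ x, s))
      = fun s => ((1 + ε * x) ^ 3)⁻¹ * deriv (fun s' => u (φ x, s')) s :=
    funext fun s => deriv_const_mul _ (hhd s)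
  rw [e1, deriv_const_mul _ ((hh'.differentiable one_ne_zero) t)]
  -- the PDE at the transformed point
  set D : ℝ := deriv (fun y => u (y, t) ^ (-(4 : ℝ) / 3) * deriv (fun z => u (z, t)) y) (φ x)
    with hD_def
  have hPDEx : deriv (deriv (fun s => u (φ x, s))) t = D := hPDE (φ x) t
  rw [hPDEx]
  -- x-derivative of H
  have hgdiff : DifferentiableAt ℝ (fun z => f z ^ (-(4 : ℝ) / 3) * deriv f z) (φ x) :=
    (((Real.hasDerivAt_rpow_const (p := -(4 : ℝ) / 3)
        (Or.inl (hFpos x).ne')).comp (φ x) (hfd' (φ x))).differentiableAt).mul (hf'd (φ x))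
  have hg : HasDerivAt (fun z => f z ^ (-(4 : ℝ) / 3) * deriv f z) D (φ x) := by
    have := hgdiff.hasDerivAt
    convert this using 2
  have hr1 : HasDerivAt (fun z => f z ^ (-(1 : ℝ) / 3))
      ((-(1 : ℝ) / 3 * f (φ x) ^ (-(1 : ℝ) / 3 - 1)) * deriv f (φ x)) (φ x) :=
    (Real.hasDerivAt_rpow_const (Or.inl (hFpos x).ne')).comp (φ x) (hfd' (φ x))
  have t1 : HasDerivAt (fun y => -(3 * ε) * f (φ y) ^ (-(1 : ℝ) / 3))
      (-(3 * ε) * (((-(1 : ℝ) / 3 * f (φ x) ^ (-(1 : ℝ) / 3 - 1)) * deriv f (φ x))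
        * ((1 + ε * x) ^ 2)⁻¹)) x :=
    ((hr1.comp x (hφ x hx))).const_mul _
  have t2 : HasDerivAt (fun y => (1 + ε * y)⁻¹ * (f (φ y) ^ (-(4 : ℝ) / 3) * deriv f (φ y)))
      (-ε / (1 + ε * x) ^ 2 * (f (φ x) ^ (-(4 : ℝ) / 3) * deriv f (φ x))
        + (1 + ε * x)⁻¹ * (D * ((1 + ε * x) ^ 2)⁻¹)) x :=
    ((ha x).inv hx.ne').mul ((hg.comp x (hφ x hx)))
  have hH' : deriv H x = -(3 * ε) * (((-(1 : ℝ) / 3 * f (φ x) ^ (-(1 : ℝ) / 3 - 1))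
        * deriv f (φ x)) * ((1 + ε * x) ^ 2)⁻¹)
      + (-ε / (1 + ε * x) ^ 2 * (f (φ x) ^ (-(4 : ℝ) / 3) * deriv f (φ x))
        + (1 + ε * x)⁻¹ * (D * ((1 + ε * x) ^ 2)⁻¹)) := (t1.add t2).deriv
  rw [hG.deriv_eq, hH']
  have hexp : f (φ x) ^ (-(1 : ℝ) / 3 - 1) = f (φ x) ^ (-(4 : ℝ) / 3) := by norm_num
  rw [hexp]
  have hane : (1 + ε * x) ≠ 0 := hx.ne'
  field_simp
  ring
end

section
/- Let u : ℝ × ℝ → ℝ be a twice continuously differentiable solution with u(x,t) > 0 for all (x,t) of u_t(x,t) = u_xx(x,t) + u(x,t)·ln(u(x,t)) for all (x,t). Define U(x,t) = e^{−t}·ln(u(x,t)). Then U_t(x,t) = U_xx(x,t) + e^{t}·U_x(x,t)² for all (x,t). -/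
/-- The change of variables U = e^{−t}ln u maps positive solutions of
u_t = u_xx + u ln u to solutions of U_T = U_XX + e^T U_X². -/
theorem stmt_17 (u : ℝ × ℝ → ℝ) (hu : ContDiff ℝ 2 u)
    (hpos : ∀ x t : ℝ, 0 < u (x, t))
    (hPDE : ∀ x t : ℝ, deriv (fun s => u (x, s)) t
      = deriv (deriv (fun y => u (y, t))) x + u (x, t) * Real.log (u (x, t))) :
    let U : ℝ × ℝ → ℝ := fun p => Real.exp (-p.2) * Real.log (u p)
    ∀ x t : ℝ, deriv (fun s => U (x, s)) t
      = deriv (deriv (fun y => U (y, t))) x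
        + Real.exp t * (deriv (fun y => U (y, t)) x) ^ 2 := by
  intro U x t
  -- spatial slice
  set g : ℝ → ℝ := fun y => u (y, t) with hg_def
  have hg : ContDiff ℝ 2 g := hu.comp (contDiff_id.prodMk contDiff_const)
  have hg1 : Differentiable ℝ g := hg.differentiable (by norm_num)
  have hg2 : Differentiable ℝ (deriv g) := by
    have h2 : ContDiff ℝ (1+1) g := by exact_mod_cast hg
    exact (contDiff_succ_iff_deriv.mp h2).2.2.differentiable (by norm_num)
  -- time slice
  set f : ℝ → ℝ := fun s => u (x, s) with hf_def
  have hf : ContDiff ℝ 2 f := hu.comp (contDiff_const.prodMk contDiff_id)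
  have hf1 : Differentiable ℝ f := hf.differentiable (by norm_num)
  have hupos : ∀ y : ℝ, 0 < g y := fun y => hpos y t
  -- first spatial derivative of U
  have hUx : deriv (fun y => U (y, t)) = fun y => Real.exp (-t) * (deriv g y / g y) := by
    funext y
    have h1 : HasDerivAt (fun y => Real.log (g y)) (deriv g y / g y) y :=
      ((hg1 y).hasDerivAt).log (ne_of_gt (hupos y))
    exact (h1.const_mul (Real.exp (-t))).deriv
  -- second spatial derivative of U
  have hUxx : deriv (deriv (fun y => U (y, t))) x
      = Real.exp (-t) * ((deriv (deriv g) x * g x - deriv g x * deriv g x) / (g x) ^ 2) := by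
    rw [hUx]
    have h1 : HasDerivAt (fun y => deriv g y / g y)
        ((deriv (deriv g) x * g x - deriv g x * deriv g x) / (g x) ^ 2) x :=
      ((hg2 x).hasDerivAt).div ((hg1 x).hasDerivAt) (ne_of_gt (hupos x))
    exact (h1.const_mul (Real.exp (-t))).deriv
  -- time derivative of U
  have hUt : deriv (fun s => U (x, s)) t
      = -Real.exp (-t) * Real.log (f t) + Real.exp (-t) * (deriv f t / f t) := by
    have he : HasDerivAt (fun s : ℝ => Real.exp (-s)) (-Real.exp (-t)) t := by
      have := (Real.hasDerivAt_exp (-t)).comp t (hasDerivAt_neg t)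
      simpa [Function.comp_def] using this
    have hl : HasDerivAt (fun s => Real.log (f s)) (deriv f t / f t) t :=
      ((hf1 t).hasDerivAt).log (ne_of_gt (hpos x t))
    have := he.mul hl
    have h2 : deriv (fun s => U (x, s))
        = deriv (fun s => Real.exp (-s) * Real.log (f s)) := rfl
    rw [h2]; exact this.deriv
  have hux : deriv (fun y => U (y, t)) x = Real.exp (-t) * (deriv g x / g x) := by
    rw [hUx]
  rw [hUt, hUxx, hux, hPDE x t]
  have hpos' : g x ≠ 0 := ne_of_gt (hupos x)
  have hee : Real.exp t * Real.exp (-t) = 1 := by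
    rw [← Real.exp_add]; simp
  have : deriv (deriv (fun y => u (y, t))) x = deriv (deriv g) x := rfl
  rw [this]
  have hflog : Real.log (f t) = Real.log (g x) := rfl
  have hfu : f t = g x := rfl
  rw [hflog, hfu]
  rw [Real.exp_neg]
  field_simp
  ring
end

section
/- Let u : ℝ × ℝ → ℝ be a smooth (C³ suffices) solution with u(x,t) > 0 for all (x,t) of u_t(x,t) = u_xx(x,t) + u(x,t)·ln(u(x,t)) for all (x,t). Define p(x,t) = e^{−t}·u_x(x,t)/u(x,t). Then p_t(x,t) = p_xx(x,t) + 2·e^{t}·p(x,t)·p_x(x,t) for all (x,t). -/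
private lemma hdx' {g : ℝ × ℝ → ℝ} {a b : ℝ} (hg : DifferentiableAt ℝ g (a, b)) :
    HasDerivAt (fun y => g (y, b)) (fderiv ℝ g (a, b) ((1:ℝ), (0:ℝ))) a :=
  hg.hasFDerivAt.comp_hasDerivAt a (HasDerivAt.prodMk (hasDerivAt_id a) (hasDerivAt_const a b))

private lemma hdt' {g : ℝ × ℝ → ℝ} {a b : ℝ} (hg : DifferentiableAt ℝ g (a, b)) :
    HasDerivAt (fun s => g (a, s)) (fderiv ℝ g (a, b) ((0:ℝ), (1:ℝ))) b :=
  hg.hasFDerivAt.comp_hasDerivAt b (HasDerivAt.prodMk (hasDerivAt_const b a) (hasDerivAt_id b))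

/-- Composing U = e^{−t}ln u with p = U_X: a positive C³ solution of
u_t = u_xx + u ln u yields a solution p = e^{−t}u_x/u of p_t = p_xx + 2eᵗpp_x. -/
theorem stmt_18 (u : ℝ × ℝ → ℝ) (hu : ContDiff ℝ 3 u)
    (hpos : ∀ x t : ℝ, 0 < u (x, t))
    (hPDE : ∀ x t : ℝ, deriv (fun s => u (x, s)) t
      = deriv (deriv (fun y => u (y, t))) x + u (x, t) * Real.log (u (x, t))) :
    let p : ℝ × ℝ → ℝ := fun q => Real.exp (-q.2) * deriv (fun y => u (y, q.2)) q.1 / u q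
    ∀ x t : ℝ, deriv (fun s => p (x, s)) t
      = deriv (deriv (fun y => p (y, t))) x
        + 2 * Real.exp t * p (x, t) * deriv (fun y => p (y, t)) x := by
  intro p x t
  set ux : ℝ × ℝ → ℝ := fun q => fderiv ℝ u q ((1:ℝ), (0:ℝ)) with hux_def
  set ut : ℝ × ℝ → ℝ := fun q => fderiv ℝ u q ((0:ℝ), (1:ℝ)) with hut_def
  set uxx : ℝ × ℝ → ℝ := fun q => fderiv ℝ ux q ((1:ℝ), (0:ℝ)) with huxx_def
  have uD : Differentiable ℝ u := hu.differentiable (by norm_num)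
  have hux2 : ContDiff ℝ 2 ux := (hu.fderiv_right (by norm_num)).clm_apply contDiff_const
  have hut2 : ContDiff ℝ 2 ut := (hu.fderiv_right (by norm_num)).clm_apply contDiff_const
  have huxx1 : ContDiff ℝ 1 uxx :=
    (hux2.fderiv_right (by norm_num)).clm_apply contDiff_const
  have uxD : Differentiable ℝ ux := hux2.differentiable two_ne_zero
  have utD : Differentiable ℝ ut := hut2.differentiable two_ne_zero
  have uxxD : Differentiable ℝ uxx := huxx1.differentiable one_ne_zero
  -- line derivatives
  have LX : ∀ a b : ℝ, HasDerivAt (fun y => u (y, b)) (ux (a, b)) a :=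
    fun a b => hdx' (uD (a, b))
  have LT : ∀ a b : ℝ, HasDerivAt (fun s => u (a, s)) (ut (a, b)) b :=
    fun a b => hdt' (uD (a, b))
  have LXx : ∀ a b : ℝ, HasDerivAt (fun y => ux (y, b)) (uxx (a, b)) a :=
    fun a b => hdx' (uxD (a, b))
  have LXt : ∀ a b : ℝ, HasDerivAt (fun s => ux (a, s))
      (fderiv ℝ ux (a, b) ((0:ℝ), (1:ℝ))) b := fun a b => hdt' (uxD (a, b))
  have LTx : ∀ a b : ℝ, HasDerivAt (fun y => ut (y, b))
      (fderiv ℝ ut (a, b) ((1:ℝ), (0:ℝ))) a := fun a b => hdx' (utD (a, b))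
  have LXxx : ∀ a b : ℝ, HasDerivAt (fun y => uxx (y, b))
      (fderiv ℝ uxx (a, b) ((1:ℝ), (0:ℝ))) a := fun a b => hdx' (uxxD (a, b))
  -- PDE in terms of partials
  have key : ∀ a b : ℝ, ut (a, b) = uxx (a, b) + u (a, b) * Real.log (u (a, b)) := by
    intro a b
    have h2 : deriv (fun y => u (y, b)) = fun y => ux (y, b) :=
      funext fun y => (LX y b).deriv
    have h := hPDE a b
    rwa [(LT a b).deriv, h2, (LXx a b).deriv] at h
  -- Clairaut
  have mixed : ∀ a b : ℝ, fderiv ℝ ux (a, b) ((0:ℝ), (1:ℝ))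
      = fderiv ℝ ut (a, b) ((1:ℝ), (0:ℝ)) := by
    intro a b
    have hu1 : ContDiff ℝ 2 (fderiv ℝ u) := hu.fderiv_right (by norm_num)
    have hd : HasFDerivAt (fderiv ℝ u) (fderiv ℝ (fderiv ℝ u) (a, b)) (a, b) :=
      (hu1.differentiable (by norm_num) (a, b)).hasFDerivAt
    have keyv : ∀ v : ℝ × ℝ, HasFDerivAt (fun q : ℝ × ℝ => fderiv ℝ u q v)
        ((ContinuousLinearMap.apply ℝ ℝ v).comp (fderiv ℝ (fderiv ℝ u) (a, b))) (a, b) :=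
      fun v => (ContinuousLinearMap.apply ℝ ℝ v).hasFDerivAt.comp (a, b) hd
    rw [hux_def, hut_def, (keyv _).fderiv, (keyv _).fderiv]
    simp only [ContinuousLinearMap.coe_comp', Function.comp_apply,
      ContinuousLinearMap.apply_apply]
    exact second_derivative_symmetric (fun y => (uD y).hasFDerivAt) hd _ _
  -- differentiated PDE : value of u_{xt}
  have uxt : ∀ a b : ℝ, fderiv ℝ ux (a, b) ((0:ℝ), (1:ℝ))
      = fderiv ℝ uxx (a, b) ((1:ℝ), (0:ℝ))
        + (ux (a, b) * Real.log (u (a, b)) + u (a, b) * ((u (a, b))⁻¹ * ux (a, b))) := by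
    intro a b
    rw [mixed a b]
    have hfun : (fun y => ut (y, b))
        = fun y => uxx (y, b) + u (y, b) * Real.log (u (y, b)) :=
      funext fun y => key y b
    have hlog : HasDerivAt (fun y => Real.log (u (y, b)))
        ((u (a, b))⁻¹ * ux (a, b)) a :=
      (Real.hasDerivAt_log (hpos a b).ne').comp (h₂ := Real.log) a (LX a b)
    have h2 : HasDerivAt (fun y => ut (y, b))
        (fderiv ℝ uxx (a, b) ((1:ℝ), (0:ℝ))
          + (ux (a, b) * Real.log (u (a, b)) + u (a, b) * ((u (a, b))⁻¹ * ux (a, b)))) a := by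
      rw [hfun]; exact (LXxx a b).add ((LX a b).mul hlog)
    exact (LTx a b).unique h2
  -- p in terms of partials
  have hp : ∀ a b : ℝ, p (a, b) = Real.exp (-b) * ux (a, b) / u (a, b) := by
    intro a b
    show Real.exp (-b) * deriv (fun y => u (y, b)) a / u (a, b) = _
    rw [(LX a b).deriv]
  -- spatial derivative of p
  have Px : ∀ a b : ℝ, HasDerivAt (fun y => p (y, b))
      (Real.exp (-b) * (uxx (a, b) * u (a, b) - ux (a, b) ^ 2) / u (a, b) ^ 2) a := by
    intro a b
    have hfun : (fun y => p (y, b)) = fun y => Real.exp (-b) * ux (y, b) / u (y, b) :=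
      funext fun y => hp y b
    rw [hfun]
    have hnum : HasDerivAt (fun y => Real.exp (-b) * ux (y, b))
        (Real.exp (-b) * uxx (a, b)) a := (LXx a b).const_mul _
    have h := hnum.fun_div (LX a b) (hpos a b).ne'
    refine h.congr_deriv ?_
    ring
  have hpx_fun : deriv (fun y => p (y, t))
      = fun a => Real.exp (-t) * (uxx (a, t) * u (a, t) - ux (a, t) ^ 2) / u (a, t) ^ 2 :=
    funext fun a => (Px a t).deriv
  -- second spatial derivative of p
  have hnum2 : HasDerivAt
      (fun a => Real.exp (-t) * (uxx (a, t) * u (a, t) - ux (a, t) ^ 2))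
      (Real.exp (-t) * (fderiv ℝ uxx (x, t) ((1:ℝ), (0:ℝ)) * u (x, t)
        + uxx (x, t) * ux (x, t) - 2 * ux (x, t) ^ 1 * uxx (x, t))) x :=
    (((LXxx x t).mul (LX x t)).sub ((LXx x t).pow 2)).const_mul _
  have hden2 : HasDerivAt (fun a => u (a, t) ^ 2) (2 * u (x, t) ^ 1 * ux (x, t)) x :=
    (LX x t).pow 2
  have Pxx := hnum2.fun_div hden2 (pow_ne_zero 2 (hpos x t).ne')
  -- time derivative of p
  have hptfun : (fun s => p (x, s)) = fun s => Real.exp (-s) * ux (x, s) / u (x, s) :=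
    funext fun s => hp x s
  have he : HasDerivAt (fun s : ℝ => Real.exp (-s)) (Real.exp (-t) * (-1)) t :=
    ((hasDerivAt_id t).neg).exp
  have hLHS := (he.fun_mul (LXt x t)).fun_div (LT x t) (hpos x t).ne'
  rw [hptfun, hLHS.deriv, hpx_fun, Pxx.deriv, hp x t]
  show _ = _ + 2 * Real.exp t * (Real.exp (-t) * ux (x, t) / u (x, t))
      * (Real.exp (-t) * (uxx (x, t) * u (x, t) - ux (x, t) ^ 2) / u (x, t) ^ 2)
  rw [uxt x t, key x t, Real.exp_neg]
  have hA : u (x, t) ≠ 0 := (hpos x t).ne'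
  have hE : Real.exp t ≠ 0 := Real.exp_ne_zero t
  field_simp
  ring
end
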